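/- Let X ∈ ℝ^{n×q}, β* ∈ ℝ^q, λ > 0, and ε a random vector in ℝ^n whose distribution's support is not contained in any affine hyperplane (e.g., nondegenerate Gaussian N(0, σ²I_n)). Set y = Xβ* + ε. Fix α ∈ ℝ^q \ {0}. Then the event that: the Lasso minimizer β̂ of ||y - Xβ||²₂ + λ||β||₁ is unique with X restricted to the equicorrelation set Ĵ_λ having rank |Ĵ_λ|, αᵀβ̂ = 0, and α_j β̂_j ≠ 0 for some j, has probability zero. -/

import Mathlib

open MeasureTheory Matrix
open scoped Classical

lemma quad_zero (d S m : ℝ) (hm : 0 < m) (hS : 0 ≤ S)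
    (h : ∀ t : ℝ, |t| ≤ m → 0 ≤ t * d + t ^ 2 * S) : d = 0 := by
  by_contra hd
  have hd' : 0 < |d| := abs_pos.mpr hd
  set δ := min (m / |d|) (1 / (S + 1)) with hδdef
  have hδ : 0 < δ := lt_min (div_pos hm hd') (by positivity)
  have h1 : |(-(d * δ))| ≤ m := by
    rw [abs_neg, abs_mul, abs_of_pos hδ]
    calc |d| * δ ≤ |d| * (m / |d|) := by gcongr; exact min_le_left _ _
    _ = m := by field_simp
  have h2 := h (-(d*δ)) h1
  have hδS : δ * S < 1 := by
    have hle : δ ≤ 1 / (S+1) := min_le_right _ _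
    calc δ * S ≤ (1/(S+1)) * S := by gcongr
    _ < 1 := by
        rw [div_mul_eq_mul_div, div_lt_one (by linarith)]; linarith
  have hd2 : 0 < d ^ 2 := by positivity
  nlinarith [mul_pos hd2 hδ]

lemma lasso_kkt' {n q : ℕ} (X : Matrix (Fin n) (Fin q) ℝ) (y : Fin n → ℝ)
    (βhat : Fin q → ℝ) (lam : ℝ) (hlam : 0 < lam)
    (hmin : ∀ β : Fin q → ℝ,
      (∑ i, (y i - X.mulVec βhat i) ^ 2) + lam * ∑ j, |βhat j| ≤
        (∑ i, (y i - X.mulVec β i) ^ 2) + lam * ∑ j, |β j|)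
    (j : Fin q) (hj : βhat j ≠ 0) :
    2 * (∑ i, X i j * (y i - X.mulVec βhat i)) =
      lam * (if 0 < βhat j then 1 else -1) := by
  set r : Fin n → ℝ := fun i => y i - X.mulVec βhat i with hr
  set c : ℝ := ∑ i, X i j * r i with hc
  set S : ℝ := ∑ i, (X i j) ^ 2 with hS
  have hS0 : 0 ≤ S := Finset.sum_nonneg fun i _ => sq_nonneg _
  -- the key one-dimensional inequality
  have key : ∀ t : ℝ, 0 ≤ -2 * t * c + t ^ 2 * S
      + lam * (|βhat j + t| - |βhat j|) := by
    intro t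
    have h := hmin (Function.update βhat j (βhat j + t))
    set β := Function.update βhat j (βhat j + t) with hβ
    have hβk : ∀ k, β k = βhat k + (if k = j then t else 0) := by
      intro k
      by_cases hk : k = j <;> simp [hβ, Function.update_apply, hk]
    have hmv : ∀ i, X.mulVec β i = X.mulVec βhat i + t * X i j := by
      intro i
      simp only [Matrix.mulVec, dotProduct]
      calc ∑ k, X i k * β k
          = ∑ k, (X i k * βhat k + (if k = j then X i k * t else 0)) := by
            apply Finset.sum_congr rfl
            intro k _
            rw [hβk k]
            by_cases hk : k = j <;> simp [hk] <;> ring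
        _ = (∑ k, X i k * βhat k) + ∑ k, (if k = j then X i k * t else 0) := by
            rw [Finset.sum_add_distrib]
        _ = (∑ k, X i k * βhat k) + t * X i j := by
            rw [Finset.sum_ite_eq' Finset.univ j (fun k => X i k * t)]
            simp [mul_comm]
    have hsq : ∑ i, (y i - X.mulVec β i) ^ 2
        = (∑ i, r i ^ 2) - 2 * t * c + t ^ 2 * S := by
      have : ∀ i, (y i - X.mulVec β i) ^ 2
          = r i ^ 2 - 2 * t * (X i j * r i) + t ^ 2 * (X i j) ^ 2 := by
        intro i; rw [hmv i]; simp only [hr]; ring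
      rw [Finset.sum_congr rfl (fun i _ => this i)]
      rw [Finset.sum_add_distrib, Finset.sum_sub_distrib, ← Finset.mul_sum, ← Finset.mul_sum]
    have habs : ∑ k, |β k| = (∑ k, |βhat k|) + (|βhat j + t| - |βhat j|) := by
      have : ∀ k, |β k| = |βhat k| + (if k = j then |βhat j + t| - |βhat j| else 0) := by
        intro k
        by_cases hk : k = j <;> simp [hβ, Function.update_apply, hk]
      rw [Finset.sum_congr rfl (fun k _ => this k), Finset.sum_add_distrib,
        Finset.sum_ite_eq' Finset.univ j]
      simp
    rw [hsq, habs] at h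
    have h0 : (∑ i, (y i - X.mulVec βhat i) ^ 2) = ∑ i, r i ^ 2 := by
      apply Finset.sum_congr rfl; intro i _; rw [hr]
    rw [h0] at h
    nlinarith [h]
  by_cases hpos : 0 < βhat j
  · simp only [hpos, if_pos]
    have h2 : (lam - 2 * c) = 0 := by
      apply quad_zero _ S (βhat j) hpos hS0
      intro t ht
      have habs : |βhat j + t| = βhat j + t := by
        rw [abs_of_nonneg]
        have := abs_le.mp ht
        linarith [this.1]
      have := key t
      rw [habs, abs_of_pos hpos] at this
      nlinarith [this]
    linarith
  · have hneg : βhat j < 0 := lt_of_le_of_ne (not_lt.mp hpos) hj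
    rw [if_neg hpos]
    have h2 : (-lam - 2 * c) = 0 := by
      apply quad_zero _ S (-(βhat j)) (by linarith) hS0
      intro t ht
      have habs : |βhat j + t| = -(βhat j + t) := by
        rw [abs_of_nonpos]
        have := abs_le.mp ht
        linarith [this.2]
      have := key t
      rw [habs] at this
      have habs0 : |βhat j| = -βhat j := abs_of_neg hneg
      rw [habs0] at this
      nlinarith [this]
    linarith

lemma rank_full_isUnit {m : Type*} [Fintype m] [DecidableEq m]
    (A : Matrix m m ℝ) (h : A.rank = Fintype.card m) : IsUnit A := by
  rw [← Matrix.mulVec_surjective_iff_isUnit]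
  have : LinearMap.range A.mulVecLin = ⊤ := by
    apply Submodule.eq_top_of_finrank_eq
    rw [← Matrix.rank, h, Module.finrank_fintype_fun_eq_card]
  intro v
  have := this ▸ Submodule.mem_top (x := v) (R := ℝ)
  obtain ⟨u, hu⟩ := LinearMap.mem_range.mp this
  exact ⟨u, hu⟩

section Main

variable {n q : ℕ}

/-- the submatrix of columns in `J` -/
noncomputable def colSub (X : Matrix (Fin n) (Fin q) ℝ) (J : Set (Fin q)) :
    Matrix (Fin n) {j // j ∈ J} ℝ :=
  X.submatrix id Subtype.val

noncomputable def uVec (X : Matrix (Fin n) (Fin q) ℝ) (J : Set (Fin q)) (α : Fin q → ℝ) :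
    {j // j ∈ J} → ℝ :=
  ((colSub X J)ᵀ * colSub X J)⁻¹.mulVec (fun j => α j.val)

noncomputable def wVec (X : Matrix (Fin n) (Fin q) ℝ) (J : Set (Fin q)) (α : Fin q → ℝ) :
    Fin n → ℝ :=
  (colSub X J).mulVec (uVec X J α)

noncomputable def cVal (X : Matrix (Fin n) (Fin q) ℝ) (J : Set (Fin q)) (α : Fin q → ℝ)
    (βstar : Fin q → ℝ) (lam : ℝ) (b : Fin q → Bool) : ℝ :=
  lam / 2 * (∑ jj : {j // j ∈ J}, uVec X J α jj * (if b jj.val then 1 else -1))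
    - ∑ i, wVec X J α i * (X.mulVec βstar) i

end Main

set_option maxHeartbeats 1000000 in
theorem stmt_14 {Ω : Type*} [MeasurableSpace Ω] (μ : Measure Ω)
    [IsProbabilityMeasure μ] (n q : ℕ)
    (X : Matrix (Fin n) (Fin q) ℝ) (βstar : Fin q → ℝ)
    (ε : Ω → Fin n → ℝ)
    (hsupp : ∀ a : Fin n → ℝ, a ≠ 0 → ∀ c : ℝ,
      μ {ω | ∑ i, a i * ε ω i = c} = 0)
    (lam : ℝ) (hlam : 0 < lam) (α : Fin q → ℝ) (hα : α ≠ 0) :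
    μ {ω | ∃ βhat : Fin q → ℝ,
        (∀ β : Fin q → ℝ,
          (∑ i, ((X.mulVec βstar + ε ω) i - X.mulVec βhat i) ^ 2) +
              lam * ∑ j, |βhat j| ≤
            (∑ i, ((X.mulVec βstar + ε ω) i - X.mulVec β i) ^ 2) +
              lam * ∑ j, |β j|) ∧
        (let J : Set (Fin q) := {j |
            |∑ i, X i j * ((X.mulVec βstar + ε ω) i - X.mulVec βhat i)| = lam / 2};
          (X.submatrix id (Subtype.val : {j // j ∈ J} → Fin q)).rank = J.ncard) ∧
        (∑ j, α j * βhat j = 0) ∧ (∃ j, α j * βhat j ≠ 0)} = 0 := by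
  classical
  set E : Set (Fin q) × (Fin q → Bool) → Set Ω := fun p =>
    if wVec X p.1 α ≠ 0 then
      {ω | ∑ i, wVec X p.1 α i * ε ω i = cVal X p.1 α βstar lam p.2} else ∅
    with hE
  apply measure_mono_null (t := ⋃ p, E p)
  · -- coverage
    rintro ω ⟨βhat, hmin, hrank, hzero, j₀, hj₀⟩
    set y : Fin n → ℝ := X.mulVec βstar + ε ω with hy
    set cvec : Fin q → ℝ := fun j => ∑ i, X i j * (y i - X.mulVec βhat i) with hcvec
    set J : Set (Fin q) := {j | |cvec j| = lam / 2} with hJ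
    have hkkt : ∀ j, βhat j ≠ 0 →
        2 * cvec j = lam * (if 0 < βhat j then 1 else -1) := by
      intro j hj
      exact lasso_kkt' X y βhat lam hlam hmin j hj
    have hmem : ∀ j, βhat j ≠ 0 → j ∈ J := by
      intro j hj
      have h := hkkt j hj
      simp only [hJ, Set.mem_setOf_eq]
      by_cases hb : 0 < βhat j
      · rw [if_pos hb] at h
        rw [abs_of_pos (by linarith)]; linarith
      · rw [if_neg hb] at h
        rw [abs_of_neg (by linarith)]; linarith
    have hsupport : ∀ j, j ∉ J → βhat j = 0 := by
      intro j hj; by_contra hb; exact hj (hmem j hb)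
    -- sign pattern
    set zb : Fin q → Bool := fun j => decide (0 ≤ cvec j) with hzb
    have hz : ∀ j, j ∈ J → cvec j = lam / 2 * (if zb j then 1 else -1) := by
      intro j hj
      have habs : |cvec j| = lam / 2 := hj
      by_cases hb : 0 ≤ cvec j
      · have : zb j = true := by simp [hzb, hb]
        rw [this, if_pos rfl, mul_one, ← habs, abs_of_nonneg hb]
      · have : zb j = false := by simp [hzb, hb]
        rw [this]
        simp only [Bool.false_eq_true, if_false]
        push_neg at hb
        rw [← habs, abs_of_neg hb]; ring
    -- linear algebra setup
    set T := {j // j ∈ J}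
    set Xs : Matrix (Fin n) T ℝ := colSub X J with hXs
    set G : Matrix T T ℝ := Xsᵀ * Xs with hG
    set u : T → ℝ := uVec X J α with hu
    set w : Fin n → ℝ := wVec X J α with hw
    have hGsym : Gᵀ = G := by
      rw [hG, Matrix.transpose_mul, Matrix.transpose_transpose]
    have hGrank : G.rank = Fintype.card T := by
      rw [hG, Matrix.rank_transpose_mul_self]
      have h1 : Xs.rank = J.ncard := hrank
      rw [h1, ← Nat.card_coe_set_eq, Nat.card_eq_fintype_card]
    have hGunit : IsUnit G := rank_full_isUnit G hGrank
    have hGu : G.mulVec u = fun jj : T => α jj.val := by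
      rw [hu, uVec, ← hXs, ← hG, Matrix.mulVec_mulVec,
        Matrix.mul_nonsing_inv _ ((Matrix.isUnit_iff_isUnit_det G).mp hGunit),
        Matrix.one_mulVec]
    -- sum-over-support lemma
    have hsum : ∀ f : Fin q → ℝ, (∀ j, j ∉ J → f j = 0) →
        ∑ jj : T, f jj.val = ∑ j, f j := by
      intro f hf
      rw [← Finset.sum_subtype (Finset.univ.filter (· ∈ J))
        (by intro x; simp) (fun j => f j)]
      apply Finset.sum_filter_of_ne
      intro x _ hx
      by_contra hxJ
      exact hx (hf x hxJ)
    -- βhat is supported on J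
    have hXβ : X.mulVec βhat = Xs.mulVec (fun jj : T => βhat jj.val) := by
      funext i
      simp only [Matrix.mulVec, dotProduct, hXs, colSub, Matrix.submatrix_apply, id]
      exact (hsum (fun j => X i j * βhat j)
        (fun j hj => by show X i j * βhat j = 0; rw [hsupport j hj, mul_zero])).symm
    have hαβ : ∑ jj : T, α jj.val * βhat jj.val = 0 := by
      rw [hsum (fun j => α j * βhat j)
        (fun j hj => by show α j * βhat j = 0; rw [hsupport j hj, mul_zero])]
      exact hzero
    -- Xsᵀ (y - Xβhat) = cvec on J
    have hXsr : Xsᵀ.mulVec (fun i => y i - X.mulVec βhat i) = fun jj : T => cvec jj.val := by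
      funext jj
      simp only [Matrix.mulVec, dotProduct, Matrix.transpose_apply, hXs, colSub,
        Matrix.submatrix_apply, id, hcvec]
    -- key identity : Xsᵀ y = G βhatT + cvecT
    have hXsy : Xsᵀ.mulVec y
        = G.mulVec (fun jj : T => βhat jj.val) + fun jj : T => cvec jj.val := by
      have hy2 : y = X.mulVec βhat + fun i => y i - X.mulVec βhat i := by
        funext i; simp
      calc Xsᵀ.mulVec y
          = Xsᵀ.mulVec (X.mulVec βhat) + Xsᵀ.mulVec (fun i => y i - X.mulVec βhat i) := by
            conv_lhs => rw [hy2]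
            rw [Matrix.mulVec_add]
        _ = G.mulVec (fun jj : T => βhat jj.val) + fun jj : T => cvec jj.val := by
            rw [hXsr, hXβ, Matrix.mulVec_mulVec, ← hG]
    -- main computation
    have hmain : ∑ i, w i * y i
        = lam / 2 * ∑ jj : T, u jj * (if zb jj.val then 1 else -1) := by
      have hswap : dotProduct (Xs.mulVec u) y = dotProduct u (Xsᵀ.mulVec y) := by
        rw [dotProduct_comm, Matrix.dotProduct_mulVec, ← Matrix.mulVec_transpose,
          dotProduct_comm]
      have h1 : ∑ i, w i * y i = dotProduct u (Xsᵀ.mulVec y) := by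
        rw [← hswap]
        rw [hw, wVec, ← hXs, ← hu]
        rfl
      rw [h1, hXsy, dotProduct_add]
      have h2 : dotProduct u (G.mulVec (fun jj : T => βhat jj.val)) = 0 := by
        rw [Matrix.dotProduct_mulVec, ← Matrix.mulVec_transpose, hGsym, hGu]
        simpa [dotProduct] using hαβ
      rw [h2, zero_add]
      rw [dotProduct]
      rw [Finset.mul_sum]
      apply Finset.sum_congr rfl
      intro jj _
      rw [hz jj.val jj.property]; ring
    -- w ≠ 0
    have hw0 : w ≠ 0 := by
      intro hww
      have h1 : Xsᵀ.mulVec w = fun jj : T => α jj.val := by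
        rw [hw, wVec, ← hXs, ← hu, Matrix.mulVec_mulVec, ← hG, hGu]
      rw [hww, Matrix.mulVec_zero] at h1
      have hj₀J : j₀ ∈ J := by
        apply hmem; intro hb; rw [hb, mul_zero] at hj₀; exact hj₀ rfl
      have : α j₀ = 0 := by
        have := congrFun h1.symm ⟨j₀, hj₀J⟩
        simpa using this
      rw [this, zero_mul] at hj₀; exact hj₀ rfl
    -- conclude membership
    refine Set.mem_iUnion.mpr ⟨⟨J, zb⟩, ?_⟩
    simp only [hE]
    rw [if_pos (show wVec X J α ≠ 0 from hw0)]
    show ∑ i, w i * ε ω i = cVal X J α βstar lam zb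
    rw [cVal, ← hu, ← hw]
    have hsplit : ∑ i, w i * y i
        = (∑ i, w i * (X.mulVec βstar) i) + ∑ i, w i * ε ω i := by
      rw [← Finset.sum_add_distrib]
      apply Finset.sum_congr rfl
      intro i _
      rw [hy]; simp; ring
    rw [hsplit] at hmain
    linarith [hmain]
  · apply measure_iUnion_null
    intro p
    simp only [hE]
    split_ifs with hw
    · exact hsupp _ hw _
    · simp
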